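/- For every integer q ≥ 1 and ε ∈ ℝ, define the effective Hamiltonian H(x, y, z) = ψ_q(x, y) + ε·(y·sin z − x·cos z). Then the Q-flow vector field satisfies v = (∂H/∂y, −∂H/∂x, ψ_q), and v is a Cartan–Arnol'd system for the 2-form dα_q with pointwise value dα_q(u, w) = ψ_q·(u₂w₁ − u₁w₂) − (⟨∇H, u⟩·w₃ − ⟨∇H, w⟩·u₃) (the exterior derivative of α_q = (∫^y ψ_q dy) dx − H dz): at every point, dα_q(v, w) = 0 for all w ∈ ℝ³, i.e. ι_v dα_q = 0. -/

import Mathlib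

/-- The stream function of Zaslavsky's Q-flow:
`ψ_q(x, y) = Σ_{j=1}^{q} cos(x cos(2πj/q) + y sin(2πj/q))`. -/
noncomputable def psi (q : ℕ) (x y : ℝ) : ℝ :=
  ∑ j ∈ Finset.Icc 1 q,
    Real.cos (x * Real.cos (2 * Real.pi * j / q) + y * Real.sin (2 * Real.pi * j / q))

/-- The effective Hamiltonian of the Q-flow:
`H(x, y, z) = ψ_q(x, y) + ε (y sin z − x cos z)`. -/
noncomputable def Qham (q : ℕ) (ε : ℝ) (x y z : ℝ) : ℝ :=
  psi q x y + ε * (y * Real.sin z - x * Real.cos z)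

lemma psi_diff_x (q : ℕ) (y : ℝ) : Differentiable ℝ (fun s => psi q s y) := by
  unfold psi; apply Differentiable.fun_sum; intro j _; fun_prop

lemma psi_diff_y (q : ℕ) (x : ℝ) : Differentiable ℝ (fun s => psi q x s) := by
  unfold psi; apply Differentiable.fun_sum; intro j _; fun_prop

lemma aux_lin (c d e : ℝ) : deriv (fun s : ℝ => c * s + d) e = c := by
  rw [deriv_fun_add (by fun_prop) (by fun_prop), deriv_const]
  show deriv (fun s : ℝ => c * s) e + 0 = c
  rw [deriv_const_mul _ differentiable_id.differentiableAt]
  simp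

lemma Qham_dx (q : ℕ) (ε : ℝ) (x y z : ℝ) :
    deriv (fun s => Qham q ε s y z) x
      = deriv (fun s => psi q s y) x - ε * Real.cos z := by
  have h : (fun s => Qham q ε s y z)
      = fun s => psi q s y + ((-(ε * Real.cos z)) * s + ε * Real.sin z * y) := by
    funext s; unfold Qham; ring
  rw [h, deriv_fun_add ((psi_diff_x q y) x) (by fun_prop), aux_lin]; ring

lemma Qham_dy (q : ℕ) (ε : ℝ) (x y z : ℝ) :
    deriv (fun s => Qham q ε x s z) y
      = deriv (fun s => psi q x s) y + ε * Real.sin z := by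
  have h : (fun s => Qham q ε x s z)
      = fun s => psi q x s + ((ε * Real.sin z) * s + (-(ε * Real.cos z * x))) := by
    funext s; unfold Qham; ring
  rw [h, deriv_fun_add ((psi_diff_y q x) y) (by fun_prop), aux_lin]

/-- With `H(x, y, z) = ψ_q(x, y) + ε (y sin z − x cos z)`, the Q-flow vector
field `v = (∂ψ_q/∂y + ε sin z, −∂ψ_q/∂x + ε cos z, ψ_q)` satisfies `v = (∂H/∂y, −∂H/∂x, ψ_q)`,
and `v` is Cartan–Arnol'd for the 2-form
`dα_q(u, w) = ψ_q (u₂w₁ − u₁w₂) − (⟨∇H, u⟩ w₃ − ⟨∇H, w⟩ u₃)`: at every point,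
`dα_q(v, w) = 0` for all `w`, i.e. `ι_v dα_q = 0`. -/
theorem stmt15 (q : ℕ) (hq : 1 ≤ q) (ε : ℝ) (x y z : ℝ) :
    let Hx := deriv (fun s => Qham q ε s y z) x
    let Hy := deriv (fun s => Qham q ε x s z) y
    let Hz := deriv (fun s => Qham q ε x y s) z
    let v1 := deriv (fun s => psi q x s) y + ε * Real.sin z
    let v2 := -(deriv (fun s => psi q s y) x) + ε * Real.cos z
    let v3 := psi q x y
    -- v = (∂H/∂y, −∂H/∂x, ψ_q)
    (v1 = Hy ∧ v2 = -Hx) ∧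
    -- ι_v dα_q = 0
    (∀ w : Fin 3 → ℝ,
      psi q x y * (v2 * w 0 - v1 * w 1)
        - ((Hx * v1 + Hy * v2 + Hz * v3) * w 2
            - (Hx * w 0 + Hy * w 1 + Hz * w 2) * v3) = 0) := by
  intro Hx Hy Hz v1 v2 v3
  have h1 : v1 = Hy := by simp only [v1, Hy, Qham_dy]
  have h2 : v2 = -Hx := by simp only [v2, Hx, Qham_dx]; ring
  refine ⟨⟨h1, h2⟩, fun w => ?_⟩
  rw [h1, h2]
  show psi q x y * (-Hx * w 0 - Hy * w 1) - _ = 0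
  have h3 : v3 = psi q x y := rfl
  rw [h3]; ring
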